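/- Let h : ℝ → ℝ be twice differentiable, k ∈ ℝ, a₃(u) = (−h(u)·cos u + h'(u)·sin u, −h(u)·sin u − h'(u)·cos u, 0), and g(u, v) = a₃(u) + v·(k·cos u, k·sin u, 1). Then for every (u, v) with h(u) + h''(u) − v·k ≠ 0, the unit normal n(u, v) = (∂g/∂u × ∂g/∂v) / ‖∂g/∂u × ∂g/∂v‖ satisfies |⟨n(u, v), (0, 0, 1)⟩| = |k| / √(1 + k²); consequently the Gauss image of the regular part of g is contained in the union of the two horizontal planes z = ±k/√(1 + k²), each at distance |k|/√(1 + k²) from the origin: the Gauss image of a surface of constant slope is planar. -/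

import Mathlib

open Real
open scoped RealInnerProductSpace

/-- A point of Euclidean `ℝ³` from its three coordinates. -/
noncomputable def vec3 (x y z : ℝ) : EuclideanSpace ℝ (Fin 3) :=
  (WithLp.equiv 2 (Fin 3 → ℝ)).symm ![x, y, z]

/-- The standard cross product on Euclidean `ℝ³`. -/
noncomputable def cross3 (a b : EuclideanSpace ℝ (Fin 3)) : EuclideanSpace ℝ (Fin 3) :=
  vec3 (a 1 * b 2 - a 2 * b 1) (a 2 * b 0 - a 0 * b 2) (a 0 * b 1 - a 1 * b 0)

@[simp] lemma vec3_apply0 (x y z : ℝ) : vec3 x y z 0 = x := rfl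
@[simp] lemma vec3_apply1 (x y z : ℝ) : vec3 x y z 1 = y := rfl
@[simp] lemma vec3_apply2 (x y z : ℝ) : vec3 x y z 2 = z := rfl

lemma vec3_add (a b c d e f : ℝ) : vec3 a b c + vec3 d e f = vec3 (a+d) (b+e) (c+f) := by
  ext i; fin_cases i <;> rfl

lemma smul_vec3 (s a b c : ℝ) : s • vec3 a b c = vec3 (s*a) (s*b) (s*c) := by
  ext i; fin_cases i <;> simp [vec3]

lemma norm_vec3 (x y z : ℝ) : ‖vec3 x y z‖ = Real.sqrt (x^2 + y^2 + z^2) := by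
  simp [EuclideanSpace.norm_eq, vec3, Fin.sum_univ_three]

lemma inner_vec3 (x y z a b c : ℝ) :
    ⟪vec3 x y z, vec3 a b c⟫ = x*a + y*b + z*c := by
  simp [PiLp.inner_apply, vec3, Fin.sum_univ_three]
  ring

lemma hasDerivAt_vec3 {A B C : ℝ → ℝ} {A' B' C' : ℝ} {u : ℝ}
    (hA : HasDerivAt A A' u) (hB : HasDerivAt B B' u) (hC : HasDerivAt C C' u) :
    HasDerivAt (fun t => vec3 (A t) (B t) (C t)) (vec3 A' B' C') u := by
  have : HasDerivAt (fun t => (![A t, B t, C t] : Fin 3 → ℝ)) ![A', B', C'] u := by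
    rw [hasDerivAt_pi]
    intro i; fin_cases i <;> simpa
  exact ((PiLp.continuousLinearEquiv 2 ℝ
    (fun _ : Fin 3 => ℝ)).symm.toContinuousLinearMap.hasFDerivAt.comp_hasDerivAt u this)

/-- For a twice differentiable support function `h` and conical curvature `k`, at every
regular point (`h(u) + h''(u) − v·k ≠ 0`) of the constant-slope surface
`g(u,v) = a₃(u) + v·(k·cos u, k·sin u, 1)`, the unit normal
`n = (∂g/∂u × ∂g/∂v)/‖∂g/∂u × ∂g/∂v‖` satisfies `|⟨n, e₃⟩| = |k|/√(1+k²)`; consequently the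
Gauss image of the regular part of `g` lies in the union of the two horizontal planes
`z = ±k/√(1+k²)`: the Gauss image of a surface of constant slope is planar. -/
theorem constant_slope_surface_gauss_image_planar
    (h : ℝ → ℝ) (hh : Differentiable ℝ h) (hh' : Differentiable ℝ (deriv h)) (k : ℝ)
    (a₃ : ℝ → EuclideanSpace ℝ (Fin 3))
    (ha₃ : a₃ = fun u => vec3 (-h u * Real.cos u + deriv h u * Real.sin u)
                              (-h u * Real.sin u - deriv h u * Real.cos u) 0)
    (g : ℝ → ℝ → EuclideanSpace ℝ (Fin 3))
    (hg : g = fun u v => a₃ u + v • vec3 (k * Real.cos u) (k * Real.sin u) 1)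
    (u v : ℝ) (hreg : h u + deriv (deriv h) u - v * k ≠ 0)
    (n : EuclideanSpace ℝ (Fin 3))
    (hn : n = ‖cross3 (deriv (fun t => g t v) u) (deriv (fun t => g u t) v)‖⁻¹ •
              cross3 (deriv (fun t => g t v) u) (deriv (fun t => g u t) v)) :
    |⟪n, vec3 0 0 1⟫| = |k| / Real.sqrt (1 + k ^ 2) ∧
    (⟪n, vec3 0 0 1⟫ = k / Real.sqrt (1 + k ^ 2) ∨
     ⟪n, vec3 0 0 1⟫ = -(k / Real.sqrt (1 + k ^ 2))) := by
  set c : ℝ := h u + deriv (deriv h) u - v * k with hc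
  -- component functions of t ↦ g t v
  have hgfun : (fun t => g t v) = fun t =>
      vec3 (-h t * Real.cos t + deriv h t * Real.sin t + v * (k * Real.cos t))
           (-h t * Real.sin t - deriv h t * Real.cos t + v * (k * Real.sin t))
           (0 + v * 1) := by
    funext t
    rw [hg, ha₃]
    simp only [smul_vec3, vec3_add]
  have hcos := Real.hasDerivAt_cos u
  have hsin := Real.hasDerivAt_sin u
  have h1 : HasDerivAt h (deriv h u) u := (hh u).hasDerivAt
  have h2 : HasDerivAt (deriv h) (deriv (deriv h) u) u := (hh' u).hasDerivAt
  have hA : HasDerivAt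
      (fun t => -h t * Real.cos t + deriv h t * Real.sin t + v * (k * Real.cos t))
      (c * Real.sin u) u := by
    have := ((h1.neg.mul hcos).add (h2.mul hsin)).add ((hcos.const_mul k).const_mul v)
    refine this.congr_deriv ?_
    simp only [hc, Pi.neg_apply]; ring
  have hB : HasDerivAt
      (fun t => -h t * Real.sin t - deriv h t * Real.cos t + v * (k * Real.sin t))
      (-(c * Real.cos u)) u := by
    have := ((h1.neg.mul hsin).sub (h2.mul hcos)).add ((hsin.const_mul k).const_mul v)
    refine this.congr_deriv ?_
    simp only [hc, Pi.neg_apply]; ring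
  have hC : HasDerivAt (fun _ : ℝ => (0 : ℝ) + v * 1) 0 u := hasDerivAt_const u _
  have hGu : deriv (fun t => g t v) u = vec3 (c * Real.sin u) (-(c * Real.cos u)) 0 := by
    rw [hgfun]
    exact (hasDerivAt_vec3 hA hB hC).deriv
  have hGv : deriv (fun t => g u t) v = vec3 (k * Real.cos u) (k * Real.sin u) 1 := by
    rw [hg]
    have : HasDerivAt (fun t : ℝ => a₃ u + t • vec3 (k * Real.cos u) (k * Real.sin u) 1)
        ((1:ℝ) • vec3 (k * Real.cos u) (k * Real.sin u) 1) v :=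
      ((hasDerivAt_id v).smul_const _).const_add _
    rw [one_smul] at this
    exact this.deriv
  have hcross : cross3 (deriv (fun t => g t v) u) (deriv (fun t => g u t) v)
      = vec3 (-(c * Real.cos u)) (-(c * Real.sin u)) (c * k) := by
    rw [hGu, hGv]
    simp only [cross3, vec3_apply0, vec3_apply1, vec3_apply2]
    ext i
    fin_cases i <;> simp [vec3]
    linear_combination c * k * (Real.sin_sq_add_cos_sq u)
  have hnorm : ‖cross3 (deriv (fun t => g t v) u) (deriv (fun t => g u t) v)‖
      = |c| * Real.sqrt (1 + k ^ 2) := by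
    rw [hcross, norm_vec3]
    have : (-(c * Real.cos u))^2 + (-(c * Real.sin u))^2 + (c * k)^2 = c^2 * (1 + k^2) := by
      nlinarith [Real.sin_sq_add_cos_sq u]
    rw [this, Real.sqrt_mul (sq_nonneg c), Real.sqrt_sq_eq_abs]
  have hz : ⟪n, vec3 0 0 1⟫ = (|c| * Real.sqrt (1 + k ^ 2))⁻¹ * (c * k) := by
    rw [hn, real_inner_smul_left, hnorm, hcross, inner_vec3]
    ring
  have hs : (0:ℝ) < Real.sqrt (1 + k ^ 2) := Real.sqrt_pos.mpr (by positivity)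
  have hcabs : |c| ≠ 0 := abs_ne_zero.mpr hreg
  constructor
  · rw [hz, abs_mul, abs_inv, abs_mul, abs_abs, abs_of_pos hs, abs_mul]
    field_simp
  · rcases lt_or_gt_of_ne hreg with hneg | hpos
    · right
      rw [hz, abs_of_neg hneg]
      field_simp
    · left
      rw [hz, abs_of_pos hpos]
      field_simp
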